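/- Let n ≥ 1 be an integer and let β be the symmetric bilinear form on ℝ⁴ with ordered basis (s, e₁, e₂, F) determined by β(s,s) = −n, β(e₁,e₁) = −1, β(e₂,e₂) = −1, β(F,F) = 0, β(s,F) = 1, and β(u,v) = 0 for every other pair of distinct basis vectors. Set f₁ = F − e₁ − e₂. Then {x ∈ ℝ⁴ : β(x, v) ≥ 0 for every v ∈ {s, f₁, e₁, e₂}} = cone({F, nF + s, nF + s − e₁, nF + s − e₂}). -/
import Mathlib


/-- The convex cone generated by a set `s`: all finite nonnegative real linear
combinations of elements of `s`. -/
def coneHull {E : Type*} [AddCommMonoid E] [Module ℝ E] (s : Set E) : Set E :=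
  {x | ∃ (n : ℕ) (c : Fin n → ℝ) (g : Fin n → E),
    (∀ i, 0 ≤ c i) ∧ (∀ i, g i ∈ s) ∧ x = ∑ i, c i • g i}

/-- The intersection form on `ℝ⁴` in the ordered basis `(s, e₁, e₂, F)` determined by
`β(s,s)=−n`, `β(e₁,e₁)=−1`, `β(e₂,e₂)=−1`, `β(F,F)=0`, `β(s,F)=1`, and `β = 0` on every
other pair of distinct basis vectors. -/
def interForm13 (n : ℕ) (x y : Fin 4 → ℝ) : ℝ :=
  -(n : ℝ) * (x 0 * y 0) - x 1 * y 1 - x 2 * y 2 + x 0 * y 3 + x 3 * y 0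

lemma interForm13_sum (n : ℕ) {m : ℕ} (c : Fin m → ℝ) (g : Fin m → (Fin 4 → ℝ))
    (v : Fin 4 → ℝ) :
    interForm13 n (∑ i, c i • g i) v = ∑ i, c i * interForm13 n (g i) v := by
  simp only [interForm13, Finset.sum_apply, Pi.smul_apply, smul_eq_mul,
    Finset.sum_mul, Finset.mul_sum, ← Finset.sum_sub_distrib, ← Finset.sum_add_distrib]
  apply Finset.sum_congr rfl
  intro i _
  ring

/-- With `f₁ = F − e₁ − e₂`, the dual cone of `{s, f₁, e₁, e₂}` with
respect to the intersection form is generated by `F`, `nF + s`, `nF + s − e₁`,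
`nF + s − e₂`. -/
theorem statement13 (n : ℕ) (hn : 1 ≤ n) :
    {x : Fin 4 → ℝ | ∀ v ∈ ({![1, 0, 0, 0], ![0, -1, -1, 1], ![0, 1, 0, 0],
        ![0, 0, 1, 0]} : Set (Fin 4 → ℝ)), 0 ≤ interForm13 n x v} =
      coneHull {![0, 0, 0, 1], ![1, 0, 0, (n : ℝ)], ![1, -1, 0, (n : ℝ)],
        ![1, 0, -1, (n : ℝ)]} := by
  ext x
  constructor
  · intro hx
    have h1 := hx ![1, 0, 0, 0] (by simp)
    have h2 := hx ![0, -1, -1, 1] (by simp)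
    have h3 := hx ![0, 1, 0, 0] (by simp)
    have h4 := hx ![0, 0, 1, 0] (by simp)
    simp only [interForm13, Matrix.cons_val_zero, Matrix.cons_val_one, Matrix.head_cons,
      Matrix.cons_val_two, Matrix.tail_cons, Matrix.cons_val_three] at h1 h2 h3 h4
    refine ⟨4, ![x 3 - n * x 0, x 0 + x 1 + x 2, -x 1, -x 2],
      ![![0, 0, 0, 1], ![1, 0, 0, (n : ℝ)], ![1, -1, 0, (n : ℝ)], ![1, 0, -1, (n : ℝ)]],
      ?_, ?_, ?_⟩
    · intro i
      fin_cases i <;> simp <;> linarith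
    · intro i
      fin_cases i <;> simp [Set.mem_insert_iff]
    · funext j
      simp [Fin.sum_univ_four]
      fin_cases j <;> simp <;> ring
  · rintro ⟨m, c, g, hc, hg, rfl⟩
    intro v hv
    rw [interForm13_sum]
    apply Finset.sum_nonneg
    intro i _
    apply mul_nonneg (hc i)
    have := hg i
    simp only [Set.mem_insert_iff, Set.mem_singleton_iff] at this hv
    rcases this with h | h | h | h <;> rw [h] <;> rcases hv with rfl | rfl | rfl | rfl <;>
      simp [interForm13] <;> ring_nf <;> positivity
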